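/- For all integers i with 0 < i < N and all real p ∈ [0, 1], Bin(N, p)(i) ≤ √(N / (2π·i·(N − i))). -/

import Mathlib

open Real Stirling Filter

lemma stirling_anti {n m : ℕ} (hn : 0 < n) (h : n ≤ m) : stirlingSeq m ≤ stirlingSeq n := by
  have h1 := stirlingSeq'_antitone (show n - 1 ≤ m - 1 by omega)
  simp only [Function.comp, Nat.succ_eq_add_one] at h1
  rwa [show m - 1 + 1 = m by omega, show n - 1 + 1 = n by omega] at h1

lemma sqrt_pi_le_stirling {n : ℕ} (hn : 0 < n) : Real.sqrt Real.pi ≤ stirlingSeq n := by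
  refine le_of_tendsto tendsto_stirlingSeq_sqrt_pi ?_
  filter_upwards [eventually_ge_atTop n] with m hm
  exact stirling_anti hn hm

lemma stirling_pos {n : ℕ} (hn : 0 < n) : 0 < stirlingSeq n := by
  have := stirlingSeq'_pos (n - 1)
  rwa [show n - 1 + 1 = n by omega] at this

lemma factorial_eq_stirling {n : ℕ} (hn : 0 < n) :
    (n.factorial : ℝ) = stirlingSeq n * (Real.sqrt (2 * n) * ((n : ℝ) / Real.exp 1) ^ n) := by
  have hx : (0:ℝ) < n := by exact_mod_cast hn
  rw [stirlingSeq]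
  field_simp

lemma pow_mul_pow_le_max (i j : ℕ) (hi : 0 < i) (hj : 0 < j)
    (p : ℝ) (hp0 : 0 ≤ p) (hp1 : p ≤ 1) :
    p ^ i * (1 - p) ^ j ≤ ((i:ℝ)/((i:ℝ)+j)) ^ i * ((j:ℝ)/((i:ℝ)+j)) ^ j := by
  have hx : (0:ℝ) < i := by exact_mod_cast hi
  have hy : (0:ℝ) < j := by exact_mod_cast hj
  have hn : (0:ℝ) < (i:ℝ) + j := by linarith
  rcases eq_or_lt_of_le hp0 with rfl | hp0'
  · rw [zero_pow hi.ne', zero_mul]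
    positivity
  rcases eq_or_lt_of_le hp1 with rfl | hp1'
  · rw [sub_self, zero_pow hj.ne', mul_zero]
    positivity
  have hq : 0 < 1 - p := by linarith
  rw [← Real.log_le_log_iff (by positivity) (by positivity),
    Real.log_mul (by positivity) (by positivity),
    Real.log_mul (by positivity) (by positivity),
    Real.log_pow, Real.log_pow, Real.log_pow, Real.log_pow]
  have h1 : Real.log p - Real.log ((i:ℝ)/((i:ℝ)+j)) ≤ p * ((i:ℝ)+j) / i - 1 := by
    rw [← Real.log_div (by positivity) (by positivity)]
    have := Real.log_le_sub_one_of_pos (show 0 < p / ((i:ℝ)/((i:ℝ)+j)) by positivity)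
    rw [div_div_eq_mul_div] at this
    linarith
  have h2 : Real.log (1-p) - Real.log ((j:ℝ)/((i:ℝ)+j)) ≤ (1-p) * ((i:ℝ)+j) / j - 1 := by
    rw [← Real.log_div (by positivity) (by positivity)]
    have := Real.log_le_sub_one_of_pos (show 0 < (1-p) / ((j:ℝ)/((i:ℝ)+j)) by positivity)
    rw [div_div_eq_mul_div] at this
    linarith
  have e1 : (i:ℝ) * (p * ((i:ℝ)+j) / i - 1) = p * ((i:ℝ)+j) - i := by field_simp
  have e2 : (j:ℝ) * ((1-p) * ((i:ℝ)+j) / j - 1) = (1-p) * ((i:ℝ)+j) - j := by field_simp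
  nlinarith [mul_le_mul_of_nonneg_left h1 hx.le, mul_le_mul_of_nonneg_left h2 hy.le]

/-- The probability mass function of the binomial distribution with parameters
`N` and `p`: `Bin(N, p)(i) = C(N, i) · p^i · (1 - p)^(N - i)`. -/
noncomputable def binPMF (N : ℕ) (p : ℝ) (i : ℕ) : ℝ :=
  (N.choose i : ℝ) * p ^ i * (1 - p) ^ (N - i)

/-- For all integers `i` with `0 < i < N` and all real `p ∈ [0, 1]`,
`Bin(N, p)(i) ≤ √(N / (2π·i·(N-i)))`. -/
theorem binPMF_le_sqrt_bound (N i : ℕ) (hi : 0 < i) (hiN : i < N)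
    (p : ℝ) (hp0 : 0 ≤ p) (hp1 : p ≤ 1) :
    binPMF N p i
      ≤ Real.sqrt ((N : ℝ) / (2 * Real.pi * (i : ℝ) * ((N - i : ℕ) : ℝ))) := by
  obtain ⟨j, rfl⟩ : ∃ j, N = i + j := ⟨N - i, by omega⟩
  have hj : 0 < j := by omega
  have hij : i + j - i = j := by omega
  have hx : (0:ℝ) < i := by exact_mod_cast hi
  have hy : (0:ℝ) < j := by exact_mod_cast hj
  have hn : (0:ℝ) < (i:ℝ) + j := by linarith
  have hπ := Real.pi_pos
  have hsi := stirling_pos hi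
  have hsj := stirling_pos hj
  have hsN := stirling_pos (show 0 < i + j by omega)
  rw [binPMF, hij]
  -- Step 1: bound the `p`-dependent part by its maximum at `p = i / (i + j)`
  have h1 : (↑((i+j).choose i) : ℝ) * p ^ i * (1 - p) ^ j
      ≤ (↑((i+j).choose i) : ℝ) * (((i:ℝ)/((i:ℝ)+j)) ^ i * ((j:ℝ)/((i:ℝ)+j)) ^ j) := by
    rw [mul_assoc]
    exact mul_le_mul_of_nonneg_left (pow_mul_pow_le_max i j hi hj p hp0 hp1) (by positivity)
  refine h1.trans ?_
  -- Step 2: rewrite via the Stirling sequence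
  have heq : (↑((i+j).choose i) : ℝ) * (((i:ℝ)/((i:ℝ)+j)) ^ i * ((j:ℝ)/((i:ℝ)+j)) ^ j)
      = (stirlingSeq (i+j) * Real.sqrt (2 * ((i:ℝ)+j)))
        / ((stirlingSeq i * stirlingSeq j) * (Real.sqrt (2*(i:ℝ)) * Real.sqrt (2*(j:ℝ)))) := by
    rw [Nat.cast_choose ℝ (show i ≤ i + j by omega), hij,
      factorial_eq_stirling (show 0 < i + j by omega), factorial_eq_stirling hi,
      factorial_eq_stirling hj]
    push_cast
    rw [pow_add]
    have he : Real.exp 1 ≠ 0 := (Real.exp_pos 1).ne'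
    have s1 : Real.sqrt (2*(i:ℝ)) ≠ 0 := by positivity
    have s2 : Real.sqrt (2*(j:ℝ)) ≠ 0 := by positivity
    have s3 : Real.sqrt (2*((i:ℝ)+j)) ≠ 0 := by positivity
    have s4 : (i:ℝ) + j ≠ 0 := hn.ne'
    field_simp
    have c1 : ((i:ℝ)+j)⁻¹ ^ i * ((i:ℝ)+j) ^ i = 1 := by rw [← mul_pow, inv_mul_cancel₀ s4, one_pow]
    have c2 : ((i:ℝ)+j)⁻¹ ^ j * ((i:ℝ)+j) ^ j = 1 := by rw [← mul_pow, inv_mul_cancel₀ s4, one_pow]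
    simp only [div_pow]
    linear_combination ((i:ℝ)^i * (j:ℝ)^j * (Real.exp 1)⁻¹^i * (Real.exp 1)⁻¹^j * (((i:ℝ)+j)⁻¹ ^ j * ((i:ℝ)+j)^j)) * c1 + ((i:ℝ)^i * (j:ℝ)^j * (Real.exp 1)⁻¹^i * (Real.exp 1)⁻¹^j) * c2
  rw [heq]
  -- Step 3: use monotonicity of the Stirling sequence and its lower bound `√π`
  have hstep : (stirlingSeq (i+j) * Real.sqrt (2 * ((i:ℝ)+j)))
        / ((stirlingSeq i * stirlingSeq j) * (Real.sqrt (2*(i:ℝ)) * Real.sqrt (2*(j:ℝ))))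
      ≤ (stirlingSeq i * Real.sqrt (2 * ((i:ℝ)+j)))
        / ((stirlingSeq i * Real.sqrt Real.pi) * (Real.sqrt (2*(i:ℝ)) * Real.sqrt (2*(j:ℝ)))) := by
    gcongr
    · exact stirling_anti hi (by omega)
    · exact sqrt_pi_le_stirling hj
  refine hstep.trans ?_
  -- Step 4: the remaining expression equals the claimed bound
  have hfin : (stirlingSeq i * Real.sqrt (2 * ((i:ℝ)+j)))
        / ((stirlingSeq i * Real.sqrt Real.pi) * (Real.sqrt (2*(i:ℝ)) * Real.sqrt (2*(j:ℝ))))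
      = Real.sqrt ((↑(i+j) : ℝ) / (2 * Real.pi * (i:ℝ) * (j:ℝ))) := by
    rw [mul_assoc (stirlingSeq i), mul_div_mul_left _ _ hsi.ne',
      ← Real.sqrt_mul (by positivity : (0:ℝ) ≤ 2*(i:ℝ)),
      ← Real.sqrt_mul Real.pi_pos.le, ← Real.sqrt_div (by positivity)]
    congr 1
    push_cast
    rw [div_eq_div_iff (by positivity) (by positivity)]
    ring
  rw [hfin]
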